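/- (Pointwise Moncrief decomposition.) Let V and E be finite-dimensional real inner product spaces, let J : V → V be a linear isometric isomorphism with J ∘ J = −id, let f : V → E be a linear map and f† : E → V its adjoint. Assume that J maps the range of f† into the kernel of f, i.e. J(range f†) ⊆ ker f. Then V decomposes as the direct sum of the three pairwise orthogonal subspaces (ker f ∩ J(ker f)), range f†, and J(range f†). -/

import Mathlib

open RealInnerProductSpace

/-- Pointwise Moncrief decomposition: for a compatible complex structure `J` on a
finite-dimensional real inner product space `V`, a linear map `f : V → E` with
adjoint `f†`, assuming `J (range f†) ⊆ ker f`, the space `V` decomposes as the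
direct sum of the pairwise orthogonal subspaces `ker f ∩ J(ker f)`, `range f†`
and `J(range f†)`. -/
theorem stmt1 {V E : Type*} [NormedAddCommGroup V] [InnerProductSpace ℝ V]
    [FiniteDimensional ℝ V] [NormedAddCommGroup E] [InnerProductSpace ℝ E]
    [FiniteDimensional ℝ E] (J : V ≃ₗᵢ[ℝ] V) (hJ : ∀ v, J (J v) = -v)
    (f : V →ₗ[ℝ] E) (K R JR : Submodule ℝ V)
    (hK : K = LinearMap.ker f ⊓
      (LinearMap.ker f).map (J.toLinearEquiv : V →ₗ[ℝ] V))
    (hR : R = LinearMap.range (LinearMap.adjoint f))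
    (hJR : JR = R.map (J.toLinearEquiv : V →ₗ[ℝ] V))
    (hsub : JR ≤ LinearMap.ker f) :
    (∀ x ∈ K, ∀ y ∈ R, ⟪x, y⟫ = 0) ∧
    (∀ x ∈ K, ∀ y ∈ JR, ⟪x, y⟫ = 0) ∧
    (∀ x ∈ R, ∀ y ∈ JR, ⟪x, y⟫ = 0) ∧
    K ⊓ R = ⊥ ∧ K ⊓ JR = ⊥ ∧ R ⊓ JR = ⊥ ∧
    K ⊔ R ⊔ JR = ⊤ := by
  have hker : LinearMap.ker f = (LinearMap.range (LinearMap.adjoint f))ᗮ := by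
    ext x
    simp only [LinearMap.mem_ker, Submodule.mem_orthogonal]
    constructor
    · rintro hx u ⟨y, rfl⟩
      rw [LinearMap.adjoint_inner_left, hx, inner_zero_right]
    · intro h
      have := h (LinearMap.adjoint f (f x)) ⟨f x, rfl⟩
      rw [LinearMap.adjoint_inner_left] at this
      exact inner_self_eq_zero.mp this
  rw [← hR] at hker
  -- J(ker f) = (J R)ᗮ
  have hmap : ∀ x, ((J.toLinearEquiv : V →ₗ[ℝ] V) x : V) = J x := fun _ => rfl
  have hE : (LinearMap.ker f).map (J.toLinearEquiv : V →ₗ[ℝ] V) = JRᗮ := by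
    ext x
    simp only [Submodule.mem_map, Submodule.mem_orthogonal, hJR]
    constructor
    · rintro ⟨k, hk, rfl⟩ u hu
      rcases Submodule.mem_map.mp hu with ⟨r, hr, rfl⟩
      rw [hmap, hmap, J.inner_map_map]
      rw [hker, Submodule.mem_orthogonal] at hk
      exact hk r hr
    · intro h
      refine ⟨-(J x), ?_, by rw [hmap, map_neg, hJ, neg_neg]⟩
      rw [hker, Submodule.mem_orthogonal]
      intro r hr
      have := h (J r) (Submodule.mem_map.mpr ⟨r, hr, rfl⟩)
      rw [inner_neg_right, ← J.inner_map_map r (J x), hJ, inner_neg_right, this]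
      simp
  have hKR : ∀ x ∈ K, ∀ y ∈ R, ⟪x, y⟫ = 0 := by
    intro x hx y hy
    rw [hK] at hx
    have hx' : x ∈ (LinearMap.ker f) := hx.1
    rw [hker] at hx'
    rw [real_inner_comm]
    exact (Submodule.mem_orthogonal _ _).mp hx' y hy
  have hKJR : ∀ x ∈ K, ∀ y ∈ JR, ⟪x, y⟫ = 0 := by
    intro x hx y hy
    rw [hK] at hx
    have hx' : x ∈ JRᗮ := hE ▸ hx.2
    exact real_inner_comm x y ▸ (Submodule.mem_orthogonal _ _).mp hx' y hy
  have hRJR : ∀ x ∈ R, ∀ y ∈ JR, ⟪x, y⟫ = 0 := by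
    intro x hx y hy
    have : y ∈ Rᗮ := hker ▸ hsub hy
    exact real_inner_comm x y ▸ (Submodule.mem_orthogonal _ _).mp this x hx
  have disj : ∀ (A B : Submodule ℝ V), (∀ x ∈ A, ∀ y ∈ B, ⟪x, y⟫ = 0) →
      A ⊓ B = ⊥ := by
    intro A B h
    rw [eq_bot_iff]
    rintro x ⟨hxA, hxB⟩
    exact inner_self_eq_zero.mp (h x hxA x hxB)
  refine ⟨hKR, hKJR, hRJR, disj _ _ hKR, disj _ _ hKJR, disj _ _ hRJR, ?_⟩
  have h1 : JR ⊔ (JRᗮ ⊓ LinearMap.ker f) = LinearMap.ker f :=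
    Submodule.sup_orthogonal_inf_of_hasOrthogonalProjection hsub
  have h2 : K = JRᗮ ⊓ LinearMap.ker f := by rw [hK, hE, inf_comm]
  have h3 : R ⊔ LinearMap.ker f = ⊤ := by
    rw [hker]; exact Submodule.sup_orthogonal_of_hasOrthogonalProjection
  calc K ⊔ R ⊔ JR = R ⊔ (JR ⊔ K) := by
        rw [sup_comm K R, sup_assoc, sup_comm K JR]
      _ = ⊤ := by rw [h2, h1, h3]
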